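/- In ℝ³ with the standard inner product, the face-centered cubic lattice L generated by (1,1,0), (1,0,1), (0,1,1) satisfies λ₁(L) = √2, its dual lattice L* (the body-centered cubic lattice scaled appropriately) satisfies λ₁(L*) = √3/2, and hence λ₁(L)·λ₁(L*) = √(3/2). -/

import Mathlib

noncomputable section

/-- The minimal Euclidean norm of a nonzero vector of a set in `ℝ³`. -/
def lam (S : Set (EuclideanSpace ℝ (Fin 3))) : ℝ := sInf (norm '' {v ∈ S | v ≠ 0})

/-- The dual lattice of a subset of Euclidean `ℝ³`. -/
def dualLat (L : Set (EuclideanSpace ℝ (Fin 3))) : Set (EuclideanSpace ℝ (Fin 3)) :=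
  {v | ∀ l ∈ L, ∃ n : ℤ, (inner ℝ v l : ℝ) = (n : ℝ)}

/-- The face-centered cubic lattice, generated by `(1,1,0)`, `(1,0,1)`, `(0,1,1)`. -/
def fccLattice : Set (EuclideanSpace ℝ (Fin 3)) :=
  {v | ∃ a b c : ℤ,
    v = a • (WithLp.equiv 2 (Fin 3 → ℝ)).symm ![1, 1, 0]
      + b • (WithLp.equiv 2 (Fin 3 → ℝ)).symm ![1, 0, 1]
      + c • (WithLp.equiv 2 (Fin 3 → ℝ)).symm ![0, 1, 1]}

lemma sq_emod_two (x : ℤ) : x^2 % 2 = x % 2 := by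
  rcases Int.even_or_odd x with ⟨k, hk⟩ | ⟨k, hk⟩ <;> subst hk <;> ring_nf <;> omega

lemma sq_big (t : ℤ) (ht : t % 2 = 0) (ht0 : t ≠ 0) : 4 ≤ t^2 := by
  obtain ⟨k, hk⟩ : ∃ k, t = 2 * k := ⟨t / 2, by omega⟩
  have hk0 : k ≠ 0 := by omega
  have h1 : 0 < k^2 := by positivity
  subst hk; nlinarith

lemma sq_one (t : ℤ) (ht0 : t ≠ 0) : 1 ≤ t^2 := by
  have : 0 < t^2 := by positivity
  omega

lemma int3 (x y z : ℤ) (h : ¬(x = 0 ∧ y = 0 ∧ z = 0)) (hp : 2 ∣ x + y + z) :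
    2 ≤ x^2 + y^2 + z^2 := by
  have h1 := sq_emod_two x
  have h2 := sq_emod_two y
  have h3 := sq_emod_two z
  have hx0 : 0 ≤ x^2 := sq_nonneg x
  have hy0 : 0 ≤ y^2 := sq_nonneg y
  have hz0 : 0 ≤ z^2 := sq_nonneg z
  rcases not_and_or.mp h with hx | h'
  · have := sq_one x hx; omega
  rcases not_and_or.mp h' with hy | hz
  · have := sq_one y hy; omega
  · have := sq_one z hz; omega

lemma int3' (p q r : ℤ) (h : ¬(p = 0 ∧ q = 0 ∧ r = 0)) (h1 : 2 ∣ p + q) (h2 : 2 ∣ q + r) :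
    3 ≤ p^2 + q^2 + r^2 := by
  have hp := sq_emod_two p
  have hq := sq_emod_two q
  have hr := sq_emod_two r
  have hx0 : 0 ≤ p^2 := sq_nonneg p
  have hy0 : 0 ≤ q^2 := sq_nonneg q
  have hz0 : 0 ≤ r^2 := sq_nonneg r
  rcases Int.emod_two_eq p with hpe | hpo
  · have hqe : q % 2 = 0 := by omega
    have hre : r % 2 = 0 := by omega
    rcases not_and_or.mp h with h0 | h'
    · have := sq_big p hpe h0; omega
    rcases not_and_or.mp h' with h0 | h0
    · have := sq_big q hqe h0; omega
    · have := sq_big r hre h0; omega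
  · omega

lemma lam_eq {S : Set (EuclideanSpace ℝ (Fin 3))} {m : ℝ}
    (hmem : ∃ v, v ∈ S ∧ v ≠ 0 ∧ ‖v‖ = m)
    (hlb : ∀ v ∈ S, v ≠ 0 → m ≤ ‖v‖) : lam S = m := by
  obtain ⟨w, hw1, hw2, hw3⟩ := hmem
  apply le_antisymm
  · apply csInf_le
    · exact ⟨0, by rintro x ⟨v, _, rfl⟩; exact norm_nonneg v⟩
    · exact ⟨w, ⟨hw1, hw2⟩, hw3⟩
  · refine le_csInf ⟨‖w‖, w, ⟨hw1, hw2⟩, rfl⟩ ?_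
    rintro x ⟨v, ⟨h1, h2⟩, rfl⟩
    exact hlb v h1 h2

lemma norm3 (v : EuclideanSpace ℝ (Fin 3)) :
    ‖v‖ = Real.sqrt ((v 0)^2 + (v 1)^2 + (v 2)^2) := by
  rw [EuclideanSpace.norm_eq]
  simp [Fin.sum_univ_three, sq_abs]

lemma inner3 (v w : EuclideanSpace ℝ (Fin 3)) :
    (inner ℝ v w : ℝ) = v 0 * w 0 + v 1 * w 1 + v 2 * w 2 := by
  simp [PiLp.inner_apply, Fin.sum_univ_three, mul_comm]

lemma fcc_apply (a b c : ℤ) :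
    ∀ v : EuclideanSpace ℝ (Fin 3),
    v = a • (WithLp.equiv 2 (Fin 3 → ℝ)).symm ![1, 1, 0]
      + b • (WithLp.equiv 2 (Fin 3 → ℝ)).symm ![1, 0, 1]
      + c • (WithLp.equiv 2 (Fin 3 → ℝ)).symm ![0, 1, 1] →
    v 0 = (a : ℝ) + b ∧ v 1 = (a : ℝ) + c ∧ v 2 = (b : ℝ) + c := by
  rintro v rfl
  refine ⟨?_, ?_, ?_⟩ <;> simp

lemma ezero (v : EuclideanSpace ℝ (Fin 3)) (h0 : v 0 = 0) (h1 : v 1 = 0) (h2 : v 2 = 0) :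
    v = 0 := by
  ext i
  fin_cases i <;> assumption

lemma sqrt34 : Real.sqrt (3 / 4) = Real.sqrt 3 / 2 := by
  rw [show (3:ℝ)/4 = (Real.sqrt 3 / 2)^2 by
    rw [div_pow, Real.sq_sqrt (by norm_num : (0:ℝ) ≤ 3)]; norm_num]
  exact Real.sqrt_sq (by positivity)

lemma gen1 : (WithLp.equiv 2 (Fin 3 → ℝ)).symm ![1, 1, 0] ∈ fccLattice :=
  ⟨1, 0, 0, by ext i; fin_cases i <;> simp⟩
lemma gen2 : (WithLp.equiv 2 (Fin 3 → ℝ)).symm ![1, 0, 1] ∈ fccLattice :=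
  ⟨0, 1, 0, by ext i; fin_cases i <;> simp⟩
lemma gen3 : (WithLp.equiv 2 (Fin 3 → ℝ)).symm ![0, 1, 1] ∈ fccLattice :=
  ⟨0, 0, 1, by ext i; fin_cases i <;> simp⟩

lemma lam_fcc : lam fccLattice = Real.sqrt 2 := by
  apply lam_eq
  · refine ⟨(WithLp.equiv 2 (Fin 3 → ℝ)).symm ![1, 1, 0], gen1, ?_, ?_⟩
    · intro h
      have := congrFun (congrArg (WithLp.equiv 2 (Fin 3 → ℝ)) h) 0
      simp at this
    · rw [norm3]
      norm_num [WithLp.equiv_symm_apply, PiLp.toLp_apply, Matrix.cons_val, Matrix.cons_val_two, Matrix.tail_cons, Matrix.head_cons]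
  · rintro v ⟨a, b, c, hv⟩ hne
    obtain ⟨h0, h1, h2⟩ := fcc_apply a b c v hv
    have hnz : ¬(a + b = 0 ∧ a + c = 0 ∧ b + c = 0) := by
      rintro ⟨e0, e1, e2⟩
      apply hne
      apply ezero <;> [rw [h0]; rw [h1]; rw [h2]] <;> exact_mod_cast
        congrArg (Int.cast : ℤ → ℝ) (by assumption)
    have key : (2:ℤ) ≤ (a+b)^2 + (a+c)^2 + (b+c)^2 :=
      int3 _ _ _ hnz ⟨a+b+c, by ring⟩
    rw [norm3, h0, h1, h2]
    apply Real.sqrt_le_sqrt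
    exact_mod_cast key

lemma dual_mem_half : ((WithLp.equiv 2 (Fin 3 → ℝ)).symm ![1/2, 1/2, 1/2]) ∈ dualLat fccLattice := by
  rintro l ⟨a, b, c, hl⟩
  obtain ⟨h0, h1, h2⟩ := fcc_apply a b c l hl
  refine ⟨a + b + c, ?_⟩
  rw [inner3, h0, h1, h2]
  simp [WithLp.equiv_symm_apply, PiLp.toLp_apply, Matrix.cons_val]
  ring

lemma lam_dual : lam (dualLat fccLattice) = Real.sqrt 3 / 2 := by
  apply lam_eq
  · refine ⟨(WithLp.equiv 2 (Fin 3 → ℝ)).symm ![1/2, 1/2, 1/2], dual_mem_half, ?_, ?_⟩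
    · intro h
      have := congrFun (congrArg (WithLp.equiv 2 (Fin 3 → ℝ)) h) 0
      simp at this
    · rw [norm3, ← sqrt34]
      norm_num [WithLp.equiv_symm_apply, PiLp.toLp_apply, Matrix.cons_val, Matrix.cons_val_two, Matrix.tail_cons, Matrix.head_cons]
  · rintro v hv hne
    obtain ⟨n1, hn1⟩ := hv _ gen1
    obtain ⟨n2, hn2⟩ := hv _ gen2
    obtain ⟨n3, hn3⟩ := hv _ gen3
    rw [inner3] at hn1 hn2 hn3
    simp [WithLp.equiv_symm_apply, PiLp.toLp_apply, Matrix.cons_val] at hn1 hn2 hn3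
    set p : ℤ := n1 + n2 - n3 with hp
    set q : ℤ := n1 - n2 + n3 with hq
    set r : ℤ := -n1 + n2 + n3 with hr
    have hv0 : v 0 = (p : ℝ) / 2 := by rw [hp]; push_cast; linarith
    have hv1 : v 1 = (q : ℝ) / 2 := by rw [hq]; push_cast; linarith
    have hv2 : v 2 = (r : ℝ) / 2 := by rw [hr]; push_cast; linarith
    have hnz : ¬(p = 0 ∧ q = 0 ∧ r = 0) := by
      rintro ⟨e0, e1, e2⟩
      apply hne
      apply ezero <;> [rw [hv0]; rw [hv1]; rw [hv2]] <;> simp [e0, e1, e2]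
    have key : (3:ℤ) ≤ p^2 + q^2 + r^2 :=
      int3' _ _ _ hnz ⟨n1, by ring⟩ ⟨n3, by ring⟩
    rw [norm3, hv0, hv1, hv2, ← sqrt34]
    apply Real.sqrt_le_sqrt
    have : (3:ℝ) ≤ (p:ℝ)^2 + (q:ℝ)^2 + (r:ℝ)^2 := by exact_mod_cast key
    nlinarith

/-- For the face-centered cubic lattice `L`: `λ₁(L) = √2`, `λ₁(L*) = √3/2`, and hence
`λ₁(L)·λ₁(L*) = √(3/2)`, the Bergé–Martinet constant `γ'₃`. -/
theorem fcc_attains_bergeMartinet :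
    lam fccLattice = Real.sqrt 2 ∧
    lam (dualLat fccLattice) = Real.sqrt 3 / 2 ∧
    lam fccLattice * lam (dualLat fccLattice) = Real.sqrt (3 / 2) := by
  refine ⟨lam_fcc, lam_dual, ?_⟩
  rw [lam_fcc, lam_dual]
  rw [show Real.sqrt 2 * (Real.sqrt 3 / 2) = Real.sqrt 2 * Real.sqrt 3 / 2 by ring,
    ← Real.sqrt_mul (by norm_num : (0:ℝ) ≤ 2)]
  rw [show (3:ℝ)/2 = (2*3)/2^2 by norm_num, Real.sqrt_div (by norm_num) _,
    Real.sqrt_sq (by norm_num : (0:ℝ) ≤ 2)]
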